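/- Let G be a class 2 graph with critical edge e = rs₀, φ ∈ C^Δ(G−e), and F a maximal multifan at r w.r.t. e and φ. If v ∈ V(F) and v ≠ r, then F contains at least |φ̄(v)| neighbors of r having degree Δ. -/

import Mathlib

/-- A proper `k`-edge-coloring: colors are in `[k] = {0, …, k-1}` and edges sharing a
vertex receive distinct colors. -/
def IsProperEdgeColoring {V : Type*} (G : SimpleGraph V) (φ : Sym2 V → ℕ) (k : ℕ) : Prop :=
  (∀ e ∈ G.edgeSet, φ e < k) ∧
  ∀ e ∈ G.edgeSet, ∀ f ∈ G.edgeSet, e ≠ f → (∃ v, v ∈ e ∧ v ∈ f) → φ e ≠ φ f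

/-- The chromatic index `χ'(G)`: least `k` admitting a proper `k`-edge-coloring. -/
noncomputable def chromaticIndex {V : Type*} (G : SimpleGraph V) : ℕ :=
  sInf {k | ∃ φ, IsProperEdgeColoring G φ k}

/-- The set of colors of `[Δ]` missing at `v` under `φ` (w.r.t. the graph `G`). -/
def missing {V : Type*} (G : SimpleGraph V) (φ : Sym2 V → ℕ) (Δ : ℕ) (v : V) : Set ℕ :=
  {c | c < Δ ∧ ∀ e ∈ G.edgeSet, v ∈ e → φ e ≠ c}

/-- `s 0, s 1, …, s p` (with the edges `e_i = r s_i`, `e_0 = r s_0` being the uncolored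
edge) forms a multifan at `r` w.r.t. the edge `r s_0` and the coloring `φ` of
`G - r s_0` with colors in `[Δ]`: vertices are distinct, different from `r`, adjacent
to `r`, and for `i ≥ 1` the color `φ(r s_i)` is missing at some earlier `s_j`. -/
def IsMultifan {V : Type*} (G : SimpleGraph V) (φ : Sym2 V → ℕ) (Δ : ℕ)
    (r : V) {p : ℕ} (s : Fin (p + 1) → V) : Prop :=
  Function.Injective s ∧ (∀ i, s i ≠ r) ∧ (∀ i, G.Adj r (s i)) ∧
  ∀ i : Fin (p + 1), i ≠ 0 →
    ∃ j : Fin (p + 1), j < i ∧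
      φ s(r, s i) ∈ missing (G.deleteEdges {s(r, s 0)}) φ Δ (s j)

/-- A multifan at `r` is maximal if it cannot be extended by a further neighbor `t` of
`r` whose edge `r t` is colored with a color missing at some vertex of the fan. -/
def IsMaximalMultifan {V : Type*} (G : SimpleGraph V) (φ : Sym2 V → ℕ) (Δ : ℕ)
    (r : V) {p : ℕ} (s : Fin (p + 1) → V) : Prop :=
  IsMultifan G φ Δ r s ∧
  ∀ t : V, G.Adj r t → t ∉ ({r} ∪ Set.range s : Set V) →
    ∀ j : Fin (p + 1), φ s(r, t) ∉ missing (G.deleteEdges {s(r, s 0)}) φ Δ (s j)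

set_option linter.unusedSectionVars false
set_option linter.unusedVariables false

namespace MDN

open SimpleGraph

variable {V : Type*} [Fintype V] [DecidableEq V]

lemma missing_congr {G' : SimpleGraph V} {ψ ψ' : Sym2 V → ℕ} {Δ : ℕ} {z : V}
    (h : ∀ f ∈ G'.edgeSet, z ∈ f → ψ' f = ψ f) :
    missing G' ψ' Δ z = missing G' ψ Δ z := by
  ext c
  constructor <;> rintro ⟨h1, h2⟩ <;> refine ⟨h1, fun f hf hzf => ?_⟩
  · rw [← h f hf hzf]; exact h2 f hf hzf
  · rw [h f hf hzf]; exact h2 f hf hzf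

lemma exists_missing {G' : SimpleGraph V} [DecidableRel G'.Adj] {ψ : Sym2 V → ℕ} {Δ : ℕ} {x : V}
    (hd : G'.degree x < Δ) : ∃ c, c ∈ missing G' ψ Δ x := by
  classical
  have hcard : ((G'.incidenceFinset x).image ψ).card < Δ := by
    calc ((G'.incidenceFinset x).image ψ).card ≤ (G'.incidenceFinset x).card :=
          Finset.card_image_le
    _ = G'.degree x := G'.card_incidenceFinset_eq_degree x
    _ < Δ := hd
  have : ¬ (Finset.range Δ ⊆ (G'.incidenceFinset x).image ψ) := by
    intro hsub
    have := Finset.card_le_card hsub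
    simp only [Finset.card_range] at this
    omega
  rw [Finset.not_subset] at this
  obtain ⟨c, hc, hcn⟩ := this
  refine ⟨c, Finset.mem_range.mp hc, fun f hf hxf hfc => ?_⟩
  exact hcn (Finset.mem_image.mpr ⟨f, by rw [mem_incidenceFinset]; exact ⟨hf, hxf⟩, hfc⟩)

lemma le_degree_of_no_missing {G' : SimpleGraph V} [DecidableRel G'.Adj] {ψ : Sym2 V → ℕ}
    {Δ : ℕ} {x : V} (h : ∀ c, c ∉ missing G' ψ Δ x) : Δ ≤ G'.degree x := by
  classical
  have key : ∀ c ∈ Finset.range Δ, ∃ f, f ∈ G'.incidenceFinset x ∧ ψ f = c := by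
    intro c hc
    have := h c
    simp only [missing, Set.mem_setOf_eq, not_and, not_forall] at this
    obtain ⟨f, hf, hxf, hfc⟩ := this (Finset.mem_range.mp hc)
    exact ⟨f, by rw [mem_incidenceFinset]; exact ⟨hf, hxf⟩, by
      by_contra hne; exact hfc hne⟩
  choose g hg1 hg2 using key
  have : Finset.card (Finset.range Δ) ≤ (G'.incidenceFinset x).card := by
    apply Finset.card_le_card_of_injOn (fun c => if hc : c ∈ Finset.range Δ then g c hc else s(x, x))
    · intro c hc; have hc' : c ∈ Finset.range Δ := hc; simp only [dif_pos hc']; exact hg1 c hc'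
    · intro c hc c' hc' heq
      rw [Finset.mem_coe] at hc hc'
      simp only [dif_pos hc, dif_pos hc'] at heq
      rw [← hg2 c hc, ← hg2 c' hc', heq]
  rwa [Finset.card_range, G'.card_incidenceFinset_eq_degree x] at this

/-- A shift-chain for the uncolored edge `r v0`. -/
def Ch (G' : SimpleGraph V) (ψ : Sym2 V → ℕ) (Δ : ℕ) (r v0 : V) : List V → Prop
  | [] => False
  | [y] => y = v0
  | x :: y :: l => x ∉ y :: l ∧ x ≠ r ∧ G'.Adj r x ∧ ψ s(r, x) ∈ missing G' ψ Δ y ∧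
      Ch G' ψ Δ r v0 (y :: l)

variable {G' : SimpleGraph V} {ψ ψ' : Sym2 V → ℕ} {Δ : ℕ} {r v0 : V}

lemma Ch.ne_nil {l : List V} (h : Ch G' ψ Δ r v0 l) : l ≠ [] := by
  rintro rfl; exact h

lemma Ch.mem_v0 {l : List V} (h : Ch G' ψ Δ r v0 l) : v0 ∈ l := by
  induction l with
  | nil => exact absurd h (by simp [Ch])
  | cons x t ih =>
    match t, h with
    | [], h => simp [Ch] at h; simp [h]
    | y :: l', h => exact List.mem_cons_of_mem x (ih h.2.2.2.2)

lemma Ch.forall_mem {l : List V} (h : Ch G' ψ Δ r v0 l) :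
    ∀ z ∈ l, z = v0 ∨ (z ≠ r ∧ G'.Adj r z) := by
  induction l with
  | nil => exact absurd h (by simp [Ch])
  | cons x t ih =>
    match t, h with
    | [], h =>
      intro z hz
      simp [Ch] at h
      simp at hz
      left; rw [hz, h]
    | y :: l', h =>
      intro z hz
      rcases List.mem_cons.mp hz with rfl | hz'
      · exact Or.inr ⟨h.2.1, h.2.2.1⟩
      · exact ih h.2.2.2.2 z hz'

lemma Ch.congr (hv0r : v0 ≠ r) {x : V} (hxr : x ≠ r)
    (heq : ∀ f, f ≠ s(r, x) → ψ' f = ψ f) :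
    ∀ {l : List V}, Ch G' ψ Δ r v0 l → x ∉ l → Ch G' ψ' Δ r v0 l := by
  intro l
  induction l with
  | nil => intro h _; exact absurd h (by simp [Ch])
  | cons a t ih =>
    match t with
    | [] => intro h _; exact h
    | y :: l' =>
      intro h hx
      obtain ⟨h1, h2, h3, h4, h5⟩ := h
      have hax : a ≠ x := fun hh => hx (hh ▸ List.mem_cons_self (a := a) (l := _))
      have hyx : y ≠ x := by
        intro hh
        exact hx (by simp [hh])
      have hyr : y ≠ r := by
        rcases h5.forall_mem y (List.mem_cons_self (a := y) (l := l')) with rfl | hy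
        · exact hv0r
        · exact hy.1
      have hcol : ψ' s(r, a) = ψ s(r, a) := by
        apply heq
        intro hh
        exact hax (Sym2.congr_right.mp hh)
      have hmiss : missing G' ψ' Δ y = missing G' ψ Δ y := by
        apply missing_congr
        intro f hf hyf
        apply heq
        rintro rfl
        rcases Sym2.mem_iff.mp hyf with rfl | rfl
        · exact hyr rfl
        · exact hyx rfl
      exact ⟨h1, h2, h3, by rw [hcol, hmiss]; exact h4,
        ih h5 (fun hh => hx (List.mem_cons_of_mem a hh))⟩

end MDN

namespace MDN
open SimpleGraph
variable {V : Type*} [Fintype V] [DecidableEq V]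
variable {G : SimpleGraph V} {G' : SimpleGraph V} {ψ ψ' : Sym2 V → ℕ} {Δ : ℕ} {r v0 : V}

lemma shift (hadj0 : G.Adj r v0)
    (hcontra : ∀ ψ₀ : Sym2 V → ℕ, IsProperEdgeColoring G ψ₀ Δ → False) :
    ∀ (l : List V) (ψ : Sym2 V → ℕ),
      IsProperEdgeColoring (G.deleteEdges {s(r, v0)}) ψ Δ →
      ∀ x, Ch (G.deleteEdges {s(r, v0)}) ψ Δ r v0 (x :: l) →
      ∀ α, α ∈ missing (G.deleteEdges {s(r, v0)}) ψ Δ r →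
        α ∈ missing (G.deleteEdges {s(r, v0)}) ψ Δ x → False := by
  set G'' := G.deleteEdges {s(r, v0)} with hG''
  have hedge : G''.edgeSet = G.edgeSet \ {s(r, v0)} := SimpleGraph.edgeSet_deleteEdges _
  intro l
  induction l with
  | nil =>
    intro ψ hψ x hch α hαr hαx
    have hx : v0 = x := Eq.symm hch
    subst hx
    set ψ₀ : Sym2 V → ℕ := fun f => if f = s(r, v0) then α else ψ f with hψ₀
    apply hcontra ψ₀
    constructor
    · intro f hf
      by_cases hfe : f = s(r, v0)
      · simp only [hψ₀, if_pos hfe]; exact hαr.1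
      · simp only [hψ₀, if_neg hfe]
        exact hψ.1 f (by rw [hedge]; exact ⟨hf, hfe⟩)
    · intro f hf g hg hfg ⟨v, hvf, hvg⟩
      by_cases hfe : f = s(r, v0) <;> by_cases hge : g = s(r, v0)
      · exact absurd (hfe.trans hge.symm) hfg
      · simp only [hψ₀, if_pos hfe, if_neg hge]
        have hg' : g ∈ G''.edgeSet := by rw [hedge]; exact ⟨hg, hge⟩
        subst hfe
        rcases Sym2.mem_iff.mp hvf with rfl | rfl
        · exact fun hh => hαr.2 g hg' hvg hh.symm
        · exact fun hh => hαx.2 g hg' hvg hh.symm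
      · simp only [hψ₀, if_neg hfe, if_pos hge]
        have hf' : f ∈ G''.edgeSet := by rw [hedge]; exact ⟨hf, hfe⟩
        subst hge
        rcases Sym2.mem_iff.mp hvg with rfl | rfl
        · exact hαr.2 f hf' hvf
        · exact hαx.2 f hf' hvf
      · simp only [hψ₀, if_neg hfe, if_neg hge]
        exact hψ.2 f (by rw [hedge]; exact ⟨hf, hfe⟩) g (by rw [hedge]; exact ⟨hg, hge⟩)
          hfg ⟨v, hvf, hvg⟩
  | cons y l' ih =>
    intro ψ hψ x hch α hαr hαx
    obtain ⟨hx, hxr, hadjx, hcol, hch'⟩ := hch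
    set c := ψ s(r, x) with hc
    have herx : s(r, x) ∈ G''.edgeSet := hadjx
    have hne : ψ s(r, x) ≠ α := hαx.2 s(r, x) herx (by simp)
    have hαc : α ≠ c := by intro hh; rw [hc] at hh; exact hne hh.symm
    set ψ' : Sym2 V → ℕ := fun f => if f = s(r, x) then α else ψ f with hψ'
    have heq : ∀ f, f ≠ s(r, x) → ψ' f = ψ f := fun f hf => by
      simp only [hψ', if_neg hf]
    have hψ'p : IsProperEdgeColoring G'' ψ' Δ := by
      constructor
      · intro f hf
        by_cases hfe : f = s(r, x)
        · simp only [hψ', if_pos hfe]; exact hαr.1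
        · simp only [hψ', if_neg hfe]; exact hψ.1 f hf
      · intro f hf g hg hfg ⟨v, hvf, hvg⟩
        by_cases hfe : f = s(r, x) <;> by_cases hge : g = s(r, x)
        · exact absurd (hfe.trans hge.symm) hfg
        · simp only [hψ', if_pos hfe, if_neg hge]
          subst hfe
          rcases Sym2.mem_iff.mp hvf with rfl | rfl
          · exact fun hh => hαr.2 g hg hvg hh.symm
          · exact fun hh => hαx.2 g hg hvg hh.symm
        · simp only [hψ', if_neg hfe, if_pos hge]
          subst hge
          rcases Sym2.mem_iff.mp hvg with rfl | rfl
          · exact hαr.2 f hf hvf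
          · exact hαx.2 f hf hvf
        · simp only [hψ', if_neg hfe, if_neg hge]
          exact hψ.2 f hf g hg hfg ⟨v, hvf, hvg⟩
    have hv0r : v0 ≠ r := hadj0.ne'
    have hch'' : Ch G'' ψ' Δ r v0 (y :: l') := Ch.congr hv0r hxr heq hch' hx
    have hyx : y ≠ x := fun hh => hx (by simp [hh])
    have hyr : y ≠ r := by
      rcases hch'.forall_mem y (List.mem_cons_self (a := y) (l := l')) with rfl | hy
      · exact hv0r
      · exact hy.1
    have hcy : c ∈ missing G'' ψ' Δ y := by
      have : missing G'' ψ' Δ y = missing G'' ψ Δ y := by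
        apply missing_congr
        intro f hf hyf
        apply heq
        rintro rfl
        rcases Sym2.mem_iff.mp hyf with rfl | rfl
        · exact hyr rfl
        · exact hyx rfl
      rw [this]; exact hcol
    have hcr : c ∈ missing G'' ψ' Δ r := by
      refine ⟨hψ.1 _ herx, fun f hf hrf => ?_⟩
      by_cases hfe : f = s(r, x)
      · simp only [hψ', if_pos hfe]; exact fun hh => hαc hh
      · simp only [hψ', if_neg hfe]
        exact hψ.2 f hf s(r, x) herx hfe ⟨r, hrf, by simp⟩
    exact ih ψ' hψ'p y hch'' c hcr hcy

lemma Ch.suffix {l : List V} (h : Ch G' ψ Δ r v0 l) {x : V} (hx : x ∈ l) :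
    ∃ m, Ch G' ψ Δ r v0 (x :: m) := by
  induction l with
  | nil => exact absurd h (by simp [Ch])
  | cons a t ih =>
    rcases List.mem_cons.mp hx with rfl | hx'
    · match t with
      | [] => exact ⟨[], h⟩
      | y :: l' => exact ⟨y :: l', h⟩
    · match t, h with
      | y :: l', h => exact ih h.2.2.2.2 hx'

lemma Ch.extend {y : V} {m : List V} (h : Ch G' ψ Δ r v0 (y :: m)) {x : V}
    (hcol : ψ s(r, x) ∈ missing G' ψ Δ y) (hxr : x ≠ r) (hadjx : G'.Adj r x) :
    ∃ m', Ch G' ψ Δ r v0 (x :: m') := by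
  by_cases hx : x ∈ y :: m
  · exact h.suffix hx
  · exact ⟨y :: m, hx, hxr, hadjx, hcol, h⟩

end MDN

namespace MDN
open SimpleGraph
variable {V : Type*} [Fintype V] [DecidableEq V]

/-- The subgraph consisting of edges colored `α` or `γ`. -/
def kempeGraph (G' : SimpleGraph V) (ψ : Sym2 V → ℕ) (α γ : ℕ) : SimpleGraph V where
  Adj x y := G'.Adj x y ∧ (ψ s(x, y) = α ∨ ψ s(x, y) = γ)
  symm := by
    constructor
    intro x y ⟨h1, h2⟩
    refine ⟨h1.symm, ?_⟩
    rwa [Sym2.eq_swap]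
  loopless := ⟨fun x h => G'.loopless.irrefl x h.1⟩

open Classical in
/-- Swap the colors `α` and `γ` on the Kempe component of `t`. -/
noncomputable def kempeSwap (G' : SimpleGraph V) (ψ : Sym2 V → ℕ) (α γ : ℕ) (t : V) :
    Sym2 V → ℕ :=
  fun f => if f ∈ (kempeGraph G' ψ α γ).edgeSet ∧ (∃ x ∈ f, (kempeGraph G' ψ α γ).Reachable t x)
    then (if ψ f = α then γ else α) else ψ f

variable {G' : SimpleGraph V} {ψ : Sym2 V → ℕ} {Δ α γ : ℕ} {t : V}

lemma kempe_edgeSet {f : Sym2 V} :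
    f ∈ (kempeGraph G' ψ α γ).edgeSet ↔ f ∈ G'.edgeSet ∧ (ψ f = α ∨ ψ f = γ) := by
  induction f using Sym2.ind with
  | _ a b => simp only [mem_edgeSet]; rfl

lemma kempe_reach_all {f : Sym2 V} (hf : f ∈ (kempeGraph G' ψ α γ).edgeSet)
    (hx : ∃ x ∈ f, (kempeGraph G' ψ α γ).Reachable t x) :
    ∀ y ∈ f, (kempeGraph G' ψ α γ).Reachable t y := by
  induction f using Sym2.ind with
  | _ a b =>
    rw [mem_edgeSet] at hf
    obtain ⟨x, hxf, hxr⟩ := hx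
    intro y hy
    rcases Sym2.mem_iff.mp hxf with rfl | rfl <;> rcases Sym2.mem_iff.mp hy with rfl | rfl
    · exact hxr
    · exact hxr.trans hf.reachable
    · exact hxr.trans hf.symm.reachable
    · exact hxr

lemma kempeSwap_eq_of_not_reach {f : Sym2 V}
    (h : ∃ x ∈ f, ¬ (kempeGraph G' ψ α γ).Reachable t x) :
    kempeSwap G' ψ α γ t f = ψ f := by
  rw [kempeSwap, if_neg]
  rintro ⟨h1, h2⟩
  obtain ⟨x, hxf, hxr⟩ := h
  exact hxr (kempe_reach_all h1 h2 x hxf)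

lemma kempeSwap_eq_of_cond {f : Sym2 V} (h1 : f ∈ G'.edgeSet) (h2 : ψ f = α ∨ ψ f = γ)
    (h3 : ∃ x ∈ f, (kempeGraph G' ψ α γ).Reachable t x) :
    kempeSwap G' ψ α γ t f = if ψ f = α then γ else α := by
  rw [kempeSwap, if_pos ⟨kempe_edgeSet.mpr ⟨h1, h2⟩, h3⟩]

lemma kempeSwap_not_ac (hαγ : α ≠ γ) {f : Sym2 V} (hf : f ∈ G'.edgeSet)
    (heq : kempeSwap G' ψ α γ t f = ψ f) {v : V} (hv : v ∈ f)
    (hr : (kempeGraph G' ψ α γ).Reachable t v) : ψ f ≠ α ∧ ψ f ≠ γ := by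
  constructor <;> intro hh
  · rw [kempeSwap_eq_of_cond hf (Or.inl hh) ⟨v, hv, hr⟩, if_pos hh, hh] at heq
    exact hαγ heq.symm
  · rw [kempeSwap_eq_of_cond hf (Or.inr hh) ⟨v, hv, hr⟩, hh] at heq
    by_cases hga : γ = α
    · exact hαγ hga.symm
    · rw [if_neg hga] at heq; exact hαγ heq

lemma kempeSwap_proper (hψ : IsProperEdgeColoring G' ψ Δ) (hαγ : α ≠ γ)
    (hα : α < Δ) (hγ : γ < Δ) :
    IsProperEdgeColoring G' (kempeSwap G' ψ α γ t) Δ := by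
  have hval : ∀ f, kempeSwap G' ψ α γ t f = ψ f ∨
      ((∀ y ∈ f, (kempeGraph G' ψ α γ).Reachable t y) ∧
        ((ψ f = α ∧ kempeSwap G' ψ α γ t f = γ) ∨ (ψ f = γ ∧ kempeSwap G' ψ α γ t f = α))) := by
    intro f
    by_cases h : f ∈ (kempeGraph G' ψ α γ).edgeSet ∧
        (∃ x ∈ f, (kempeGraph G' ψ α γ).Reachable t x)
    · right
      have hall := kempe_reach_all h.1 h.2
      have hmem := kempe_edgeSet.mp h.1
      refine ⟨hall, ?_⟩
      rcases hmem.2 with hc | hc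
      · exact Or.inl ⟨hc, by rw [kempeSwap, if_pos h, if_pos hc]⟩
      · refine Or.inr ⟨hc, ?_⟩
        rw [kempeSwap, if_pos h]
        have : ψ f ≠ α := by rw [hc]; exact fun hh => hαγ hh.symm
        rw [if_neg this]
    · left; rw [kempeSwap, if_neg h]
  constructor
  · intro f hf
    rcases hval f with h | ⟨_, h⟩
    · rw [h]; exact hψ.1 f hf
    · rcases h with ⟨_, h⟩ | ⟨_, h⟩ <;> rw [h] <;> assumption
  · intro f hf g hg hfg ⟨v, hvf, hvg⟩
    have hfψ := hψ.2 f hf g hg hfg ⟨v, hvf, hvg⟩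
    rcases hval f with h1 | ⟨hall1, h1⟩ <;> rcases hval g with h2 | ⟨hall2, h2⟩
    · rw [h1, h2]; exact hfψ
    · rw [h1]
      have := kempeSwap_not_ac hαγ hf h1 hvf (hall2 v hvg)
      rcases h2 with ⟨_, h2⟩ | ⟨_, h2⟩ <;> rw [h2]
      · exact this.2
      · exact this.1
    · rw [h2]
      have := kempeSwap_not_ac hαγ hg h2 hvg (hall1 v hvf)
      rcases h1 with ⟨_, h1⟩ | ⟨_, h1⟩ <;> rw [h1]
      · exact fun hh => this.2 hh.symm
      · exact fun hh => this.1 hh.symm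
    · rcases h1 with ⟨ha1, h1⟩ | ⟨ha1, h1⟩ <;> rcases h2 with ⟨ha2, h2⟩ | ⟨ha2, h2⟩ <;>
        rw [h1, h2]
      · exact absurd (ha1.trans ha2.symm) hfψ
      · exact fun hh => hαγ hh.symm
      · exact hαγ
      · exact absurd (ha1.trans ha2.symm) hfψ

lemma kempeSwap_missing_of_not_reach {x : V} (hx : ¬ (kempeGraph G' ψ α γ).Reachable t x) :
    missing G' (kempeSwap G' ψ α γ t) Δ x = missing G' ψ Δ x := by
  apply missing_congr
  intro f _ hxf
  exact kempeSwap_eq_of_not_reach ⟨x, hxf, hx⟩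

lemma kempeSwap_missing_flip (hαγ : α ≠ γ) (hγ : γ < Δ) {x : V}
    (hx : (kempeGraph G' ψ α γ).Reachable t x) (hαx : α ∈ missing G' ψ Δ x) :
    γ ∈ missing G' (kempeSwap G' ψ α γ t) Δ x := by
  refine ⟨hγ, fun f hf hxf => ?_⟩
  by_cases h : f ∈ (kempeGraph G' ψ α γ).edgeSet ∧
      (∃ y ∈ f, (kempeGraph G' ψ α γ).Reachable t y)
  · rw [kempeSwap, if_pos h]
    have : ψ f ≠ α := hαx.2 f hf hxf
    rw [if_neg this]
    exact hαγ
  · rw [kempeSwap, if_neg h]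
    intro hh
    exact h ⟨kempe_edgeSet.mpr ⟨hf, Or.inr hh⟩, ⟨x, hxf, hx⟩⟩

lemma kempeSwap_missing_other {x : V} {c : ℕ} (hαγ : α ≠ γ) (hcα : c ≠ α) (hcγ : c ≠ γ)
    (hc : c ∈ missing G' ψ Δ x) : c ∈ missing G' (kempeSwap G' ψ α γ t) Δ x := by
  refine ⟨hc.1, fun f hf hxf => ?_⟩
  by_cases h : f ∈ (kempeGraph G' ψ α γ).edgeSet ∧
      (∃ y ∈ f, (kempeGraph G' ψ α γ).Reachable t y)
  · rw [kempeSwap, if_pos h]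
    by_cases hfα : ψ f = α
    · rw [if_pos hfα]; exact fun hh => hcγ hh.symm
    · rw [if_neg hfα]; exact fun hh => hcα hh.symm
  · rw [kempeSwap, if_neg h]
    exact hc.2 f hf hxf

end MDN

namespace MDN
open SimpleGraph
variable {V : Type*} [Fintype V] [DecidableEq V]
variable {G' : SimpleGraph V} {ψ : Sym2 V → ℕ} {Δ α γ : ℕ} {t r v0 : V}

lemma transfer (hγr : γ ∈ missing G' ψ Δ r) (hαγ : α ≠ γ)
    (hrt : ¬ (kempeGraph G' ψ α γ).Reachable t r) :
    ∀ l, Ch G' ψ Δ r v0 l →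
      ∃ z m', Ch G' (kempeSwap G' ψ α γ t) Δ r v0 (z :: m') ∧
        (l.head? = some z ∨ γ ∈ missing G' (kempeSwap G' ψ α γ t) Δ z) := by
  intro l
  induction l with
  | nil => intro h; exact absurd h (by simp [Ch])
  | cons x tl ih =>
    match tl with
    | [] =>
      intro h
      have hx : x = v0 := h
      subst hx
      exact ⟨x, [], by simp [Ch], Or.inl rfl⟩
    | y :: l' =>
      intro h
      obtain ⟨hx, hxr, hadjx, hcol, hch'⟩ := h
      obtain ⟨z, m', hchK, hz⟩ := ih hch'
      rcases hz with hz | hγz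
      · -- z = y
        have hzy : y = z := by simpa using hz
        subst hzy
        have hcγ : ψ s(r, x) ≠ γ := hγr.2 s(r, x) hadjx (by simp)
        have hKrx : kempeSwap G' ψ α γ t s(r, x) = ψ s(r, x) :=
          kempeSwap_eq_of_not_reach ⟨r, by simp, hrt⟩
        by_cases hy' : (kempeGraph G' ψ α γ).Reachable t y
        · by_cases hcα : ψ s(r, x) = α
          · have hγy : γ ∈ missing G' (kempeSwap G' ψ α γ t) Δ y :=
              kempeSwap_missing_flip hαγ hγr.1 hy' (hcα ▸ hcol)
            exact ⟨y, m', hchK, Or.inr hγy⟩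
          · have hmiss : ψ s(r, x) ∈ missing G' (kempeSwap G' ψ α γ t) Δ y :=
              kempeSwap_missing_other hαγ hcα hcγ hcol
            obtain ⟨m'', hch''⟩ := Ch.extend hchK (by rw [hKrx]; exact hmiss) hxr hadjx
            exact ⟨x, m'', hch'', Or.inl rfl⟩
        · have hmiss : ψ s(r, x) ∈ missing G' (kempeSwap G' ψ α γ t) Δ y := by
            rw [kempeSwap_missing_of_not_reach hy']; exact hcol
          obtain ⟨m'', hch''⟩ := Ch.extend hchK (by rw [hKrx]; exact hmiss) hxr hadjx
          exact ⟨x, m'', hch'', Or.inl rfl⟩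
      · exact ⟨z, m', hchK, Or.inr hγz⟩

end MDN

namespace MDN
open SimpleGraph
variable {V : Type*} [Fintype V] [DecidableEq V]

lemma prefix_aux {H : SimpleGraph V}
    (hdeg2 : ∀ v a b c : V, H.Adj v a → H.Adj v b → H.Adj v c → a = b ∨ a = c ∨ b = c) :
    ∀ (n : ℕ) (x y u w : V) (p : H.Walk y u) (q : H.Walk y w), p.length ≤ n →
      p.IsPath → q.IsPath → H.Adj x y → x ∉ p.support → x ∉ q.support →
      (p.support <+: q.support ∨ q.support <+: p.support) := by
  intro n
  induction n with
  | zero =>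
    intro x y u w p q hlen hp hq hadj hxp hxq
    cases p with
    | nil =>
      left
      rw [SimpleGraph.Walk.support_nil]
      rw [q.support_eq_cons]
      exact ⟨q.support.tail, rfl⟩
    | cons h' p' => simp [SimpleGraph.Walk.length_cons] at hlen
  | succ n ihn =>
    intro x y u w p q hlen hp hq hadj hxp hxq
    cases p with
    | nil =>
      left
      rw [SimpleGraph.Walk.support_nil, q.support_eq_cons]
      exact ⟨q.support.tail, rfl⟩
    | @cons _ z _ h1 p' =>
      cases q with
      | nil =>
        right
        rw [SimpleGraph.Walk.support_nil, (SimpleGraph.Walk.cons h1 p').support_eq_cons]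
        exact ⟨_, rfl⟩
      | @cons _ z' _ h2 q' =>
        have hzx : z ≠ x := by
          intro hh
          apply hxp
          rw [SimpleGraph.Walk.support_cons]
          exact List.mem_cons_of_mem _ (hh ▸ p'.start_mem_support)
        have hz'x : z' ≠ x := by
          intro hh
          apply hxq
          rw [SimpleGraph.Walk.support_cons]
          exact List.mem_cons_of_mem _ (hh ▸ q'.start_mem_support)
        have hzz' : z = z' := by
          rcases hdeg2 y z z' x h1 h2 hadj.symm with h | h | h
          · exact h
          · exact absurd h hzx
          · exact absurd h hz'x
        subst hzz'
        have hp' := (SimpleGraph.Walk.cons_isPath_iff h1 p').mp hp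
        have hq' := (SimpleGraph.Walk.cons_isPath_iff h2 q').mp hq
        have hlen' : p'.length ≤ n := by
          rw [SimpleGraph.Walk.length_cons] at hlen; omega
        have := ihn y z u w p' q' hlen' hp'.1 hq'.1 h1 hp'.2 hq'.2
        rcases this with ⟨tail, ht⟩ | ⟨tail, ht⟩
        · left
          rw [SimpleGraph.Walk.support_cons, SimpleGraph.Walk.support_cons]
          exact ⟨tail, by rw [List.cons_append, ht]⟩
        · right
          rw [SimpleGraph.Walk.support_cons, SimpleGraph.Walk.support_cons]
          exact ⟨tail, by rw [List.cons_append, ht]⟩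

lemma exists_adj_of_walk {H : SimpleGraph V} {x y : V} (p : H.Walk x y) (h : x ≠ y) :
    ∃ a, H.Adj x a ∧ a ∈ p.support := by
  cases p with
  | nil => exact absurd rfl h
  | cons hadj rest => exact ⟨_, hadj, List.mem_cons_of_mem _ rest.start_mem_support⟩

lemma exists_adj_tail_of_walk {H : SimpleGraph V} {x y : V} (p : H.Walk x y) (h : x ≠ y) :
    ∃ a, H.Adj x a ∧ a ∈ p.support.tail := by
  cases p with
  | nil => exact absurd rfl h
  | cons hadj rest =>
    refine ⟨_, hadj, ?_⟩
    rw [SimpleGraph.Walk.support_cons, List.tail_cons]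
    exact rest.start_mem_support

lemma two_nbrs_of_internal {H : SimpleGraph V} {r w u : V} (q : H.Walk r w)
    (hq : q.IsPath) (hu : u ∈ q.support) (h1 : u ≠ r) (h2 : u ≠ w) :
    ∃ a b, a ≠ b ∧ H.Adj u a ∧ H.Adj u b := by
  classical
  have hspec := q.take_spec hu
  have hnodup : ((q.takeUntil u hu).support ++ (q.dropUntil u hu).support.tail).Nodup := by
    rw [← SimpleGraph.Walk.support_append, hspec]
    exact hq.support_nodup
  have hdisj := List.disjoint_of_nodup_append hnodup
  obtain ⟨a, ha_adj, ha_mem⟩ := exists_adj_of_walk (q.takeUntil u hu).reverse h1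
  rw [SimpleGraph.Walk.support_reverse, List.mem_reverse] at ha_mem
  obtain ⟨b, hb_adj, hb_mem⟩ := exists_adj_tail_of_walk (q.dropUntil u hu) h2
  exact ⟨a, b, fun hh => (hdisj ha_mem (hh ▸ hb_mem)), ha_adj, hb_adj⟩

end MDN

namespace MDN
open SimpleGraph
variable {V : Type*} [Fintype V] [DecidableEq V]

lemma three_endpoints {H : SimpleGraph V}
    (hdeg2 : ∀ v a b c : V, H.Adj v a → H.Adj v b → H.Adj v c → a = b ∨ a = c ∨ b = c)
    {r u w : V}
    (hr : ∀ y z, H.Adj r y → H.Adj r z → y = z)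
    (hu : ∀ y z, H.Adj u y → H.Adj u z → y = z)
    (hw : ∀ y z, H.Adj w y → H.Adj w z → y = z)
    (hur : u ≠ r) (hwr : w ≠ r) (huw : u ≠ w)
    (h1 : H.Reachable r u) (h2 : H.Reachable r w) : False := by
  classical
  obtain ⟨p0⟩ := h1
  obtain ⟨q0⟩ := h2
  set p := p0.bypass with hpdef
  set q := q0.bypass with hqdef
  have hp : p.IsPath := p0.bypass_isPath
  have hq : q.IsPath := q0.bypass_isPath
  clear_value p q
  cases p with
  | nil => exact hur rfl
  | @cons _ z _ hadj1 p' =>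
    cases q with
    | nil => exact hwr rfl
    | @cons _ z' _ hadj2 q' =>
      have hzz' : z = z' := hr z z' hadj1 hadj2
      subst hzz'
      have hp' := (SimpleGraph.Walk.cons_isPath_iff hadj1 p').mp hp
      have hq' := (SimpleGraph.Walk.cons_isPath_iff hadj2 q').mp hq
      have hpre := prefix_aux hdeg2 p'.length r z u w p' q' le_rfl hp'.1 hq'.1
        hadj1 hp'.2 hq'.2
      rcases hpre with hpre | hpre
      · -- u is in q's support
        have humem : u ∈ (SimpleGraph.Walk.cons hadj2 q').support := by
          rw [SimpleGraph.Walk.support_cons]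
        
          exact List.mem_cons_of_mem _ (hpre.subset p'.end_mem_support)
        obtain ⟨a, b, hab, ha, hb⟩ :=
          two_nbrs_of_internal (SimpleGraph.Walk.cons hadj2 q') hq humem hur huw
        exact hab (hu a b ha hb)
      · have hwmem : w ∈ (SimpleGraph.Walk.cons hadj1 p').support := by
          rw [SimpleGraph.Walk.support_cons]
          exact List.mem_cons_of_mem _ (hpre.subset q'.end_mem_support)
        obtain ⟨a, b, hab, ha, hb⟩ :=
          two_nbrs_of_internal (SimpleGraph.Walk.cons hadj1 p') hp hwmem hwr (Ne.symm huw)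
        exact hab (hw a b ha hb)

end MDN


/-- If `F` is a maximal multifan at `r` w.r.t. the critical edge `r s₀` and `φ`, then for
every fan vertex `v = s i` (all of which differ from `r`), the fan contains at least
`|φ̄(v)|` neighbors of `r` of degree `Δ`. -/
theorem multifan_delta_neighbors {V : Type*} [Fintype V] [DecidableEq V]
    (G : SimpleGraph V) [DecidableRel G.Adj] (r : V) {p : ℕ} (s : Fin (p + 1) → V)
    (hclass2 : chromaticIndex G = G.maxDegree + 1)
    (hcrit : chromaticIndex (G.deleteEdges {s(r, s 0)}) < chromaticIndex G)
    (φ : Sym2 V → ℕ)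
    (hφ : IsProperEdgeColoring (G.deleteEdges {s(r, s 0)}) φ G.maxDegree)
    (hF : IsMaximalMultifan G φ G.maxDegree r s) :
    ∀ i : Fin (p + 1),
      (missing (G.deleteEdges {s(r, s 0)}) φ G.maxDegree (s i)).ncard ≤
        (Finset.univ.filter fun j : Fin (p + 1) =>
          G.degree (s j) = G.maxDegree).card := by
  classical
  intro i
  obtain ⟨⟨hinj, hner, hadj, hcond⟩, hmax⟩ := hF
  set Δ := G.maxDegree with hΔ
  set G' := G.deleteEdges {s(r, s 0)} with hG'
  have hG'le : ∀ {a b : V}, G'.Adj a b → G.Adj a b := by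
    intro a b h
    rw [hG', SimpleGraph.deleteEdges_adj] at h
    exact h.1
  have hcontra : ∀ ψ₀ : Sym2 V → ℕ, IsProperEdgeColoring G ψ₀ Δ → False := by
    intro ψ₀ h
    have : chromaticIndex G ≤ Δ := Nat.sInf_le ⟨ψ₀, h⟩
    omega
  have hadj0 : G.Adj r (s 0) := hadj 0
  have hG'adj : ∀ j : Fin (p + 1), j ≠ 0 → G'.Adj r (s j) := by
    intro j hj
    rw [hG', SimpleGraph.deleteEdges_adj]
    refine ⟨hadj j, ?_⟩
    simp only [Set.mem_singleton_iff]
    intro hh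
    exact hj (hinj (Sym2.congr_right.mp hh))
  have hnadj0 : ¬ G'.Adj r (s 0) := by
    rw [hG', SimpleGraph.deleteEdges_adj]
    rintro ⟨-, hh⟩
    exact hh rfl
  -- chains from every fan vertex
  have mf_chain : ∀ j : Fin (p + 1), ∃ m, MDN.Ch G' φ Δ r (s 0) (s j :: m) := by
    have key : ∀ n : ℕ, ∀ j : Fin (p + 1), (j : ℕ) ≤ n →
        ∃ m, MDN.Ch G' φ Δ r (s 0) (s j :: m) := by
      intro n
      induction n with
      | zero =>
        intro j hj
        have hj0 : j = 0 := by
          apply Fin.ext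
          simpa using hj
        subst hj0
        exact ⟨[], rfl⟩
      | succ n ih =>
        intro j hj
        by_cases hj0 : j = 0
        · subst hj0; exact ⟨[], rfl⟩
        · obtain ⟨k, hk, hmiss⟩ := hcond j hj0
          obtain ⟨m, hm⟩ := ih k (by
            have hk' : (k : ℕ) < (j : ℕ) := hk
            omega)
          exact MDN.Ch.extend hm hmiss (hner j) (hG'adj j hj0)
    exact fun j => key p j (by omega)
  have hmissr : ∀ (j : Fin (p + 1)) α, α ∈ missing G' φ Δ (s j) →
      α ∉ missing G' φ Δ r := by
    intro j α hα hαr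
    obtain ⟨m, hm⟩ := mf_chain j
    exact MDN.shift hadj0 hcontra m φ hφ (s j) hm α hαr hα
  -- a color missing at r
  have hnsub : ∀ x : V, G'.neighborFinset x ⊆ G.neighborFinset x := by
    intro x a ha
    rw [SimpleGraph.mem_neighborFinset] at ha ⊢
    exact hG'le ha
  have hdegle : ∀ x : V, G'.degree x ≤ G.degree x := by
    intro x
    exact Finset.card_le_card (hnsub x)
  have hdegr : G'.degree r < Δ := by
    have hss : G'.neighborFinset r ⊂ G.neighborFinset r := by
      refine ⟨hnsub r, fun hsub' => ?_⟩
      have := hsub' (by rw [SimpleGraph.mem_neighborFinset]; exact hadj0)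
      rw [SimpleGraph.mem_neighborFinset] at this
      exact hnadj0 this
    calc G'.degree r < G.degree r := Finset.card_lt_card hss
    _ ≤ Δ := G.degree_le_maxDegree r
  obtain ⟨γ, hγr⟩ := MDN.exists_missing (G' := G') (ψ := φ) hdegr
  -- pairwise disjointness of missing sets of fan vertices
  have hpair : ∀ (a b : Fin (p + 1)), a ≠ b → ∀ α, α ∈ missing G' φ Δ (s a) →
      α ∈ missing G' φ Δ (s b) → False := by
    intro a b hab α hα1 hα2
    have hαγ : α ≠ γ := fun hh => hmissr a α hα1 (hh ▸ hγr)
    have hdeg2 : ∀ v x y z : V, (MDN.kempeGraph G' φ α γ).Adj v x →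
        (MDN.kempeGraph G' φ α γ).Adj v y → (MDN.kempeGraph G' φ α γ).Adj v z →
        x = y ∨ x = z ∨ y = z := by
      intro v x y z hx hy hz
      by_contra hcon
      push_neg at hcon
      obtain ⟨hxy, hxz, hyz⟩ := hcon
      have e1 : φ s(v, x) ≠ φ s(v, y) := hφ.2 _ hx.1 _ hy.1
        (fun hh => hxy (Sym2.congr_right.mp hh)) ⟨v, by simp, by simp⟩
      have e2 : φ s(v, x) ≠ φ s(v, z) := hφ.2 _ hx.1 _ hz.1
        (fun hh => hxz (Sym2.congr_right.mp hh)) ⟨v, by simp, by simp⟩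
      have e3 : φ s(v, y) ≠ φ s(v, z) := hφ.2 _ hy.1 _ hz.1
        (fun hh => hyz (Sym2.congr_right.mp hh)) ⟨v, by simp, by simp⟩
      rcases hx.2 with h1 | h1 <;> rcases hy.2 with h2 | h2 <;>
        rcases hz.2 with h3 | h3 <;> omega
    have hcolr : ∀ y : V, (MDN.kempeGraph G' φ α γ).Adj r y → φ s(r, y) = α := by
      intro y hy
      rcases hy.2 with h | h
      · exact h
      · exact absurd h (hγr.2 _ hy.1 (by simp))
    have hsub_r : ∀ y z, (MDN.kempeGraph G' φ α γ).Adj r y →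
        (MDN.kempeGraph G' φ α γ).Adj r z → y = z := by
      intro y z hy hz
      by_contra hne
      exact hφ.2 _ hy.1 _ hz.1 (fun hh => hne (Sym2.congr_right.mp hh))
        ⟨r, by simp, by simp⟩ ((hcolr y hy).trans (hcolr z hz).symm)
    have hsub_fan : ∀ (k : Fin (p + 1)), α ∈ missing G' φ Δ (s k) →
        ∀ y z, (MDN.kempeGraph G' φ α γ).Adj (s k) y →
        (MDN.kempeGraph G' φ α γ).Adj (s k) z → y = z := by
      intro k hk y z hy hz
      have hcy : φ s(s k, y) = γ := by
        rcases hy.2 with h | h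
        · exact absurd h (hk.2 _ hy.1 (by simp))
        · exact h
      have hcz : φ s(s k, z) = γ := by
        rcases hz.2 with h | h
        · exact absurd h (hk.2 _ hz.1 (by simp))
        · exact h
      by_contra hne
      exact hφ.2 _ hy.1 _ hz.1 (fun hh => hne (Sym2.congr_right.mp hh))
        ⟨s k, by simp, by simp⟩ (hcy.trans hcz.symm)
    have hnotboth : ¬ (MDN.kempeGraph G' φ α γ).Reachable r (s a) ∨
        ¬ (MDN.kempeGraph G' φ α γ).Reachable r (s b) := by
      by_contra hcon
      push_neg at hcon
      exact MDN.three_endpoints hdeg2 hsub_r (hsub_fan a hα1) (hsub_fan b hα2)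
        (hner a) (hner b) (fun hh => hab (hinj hh)) hcon.1 hcon.2
    obtain ⟨t, hαt, htr, hchain⟩ : ∃ t, α ∈ missing G' φ Δ t ∧
        ¬ (MDN.kempeGraph G' φ α γ).Reachable r t ∧
        ∃ m, MDN.Ch G' φ Δ r (s 0) (t :: m) := by
      rcases hnotboth with h | h
      · exact ⟨s a, hα1, h, mf_chain a⟩
      · exact ⟨s b, hα2, h, mf_chain b⟩
    have hKproper : IsProperEdgeColoring G' (MDN.kempeSwap G' φ α γ t) Δ :=
      MDN.kempeSwap_proper hφ hαγ hα1.1 hγr.1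
    have hrt : ¬ (MDN.kempeGraph G' φ α γ).Reachable t r := fun hh => htr hh.symm
    have hγKt : γ ∈ missing G' (MDN.kempeSwap G' φ α γ t) Δ t :=
      MDN.kempeSwap_missing_flip hαγ hγr.1 (SimpleGraph.Reachable.refl t) hαt
    have hγKr : γ ∈ missing G' (MDN.kempeSwap G' φ α γ t) Δ r := by
      rw [MDN.kempeSwap_missing_of_not_reach hrt]
      exact hγr
    obtain ⟨m0, hm0⟩ := hchain
    obtain ⟨z, m', hchK, hz⟩ := MDN.transfer hγr hαγ hrt (t :: m0) hm0
    have hγz : γ ∈ missing G' (MDN.kempeSwap G' φ α γ t) Δ z := by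
      rcases hz with hz | hz
      · have : t = z := by simpa using hz
        exact this ▸ hγKt
      · exact hz
    exact MDN.shift hadj0 hcontra m' (MDN.kempeSwap G' φ α γ t) hKproper z hchK γ hγKr hγz
  -- maximality: every missing color sits on a fan edge
  have hmaxedge : ∀ (k : Fin (p + 1)) c, c ∈ missing G' φ Δ (s k) →
      ∃ j : Fin (p + 1), G'.Adj r (s j) ∧ φ s(r, s j) = c := by
    intro k c hc
    have hcr := hmissr k c hc
    have hn : ¬ (c < Δ ∧ ∀ f ∈ G'.edgeSet, r ∈ f → φ f ≠ c) := hcr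
    push_neg at hn
    obtain ⟨f, hf, hrf, hfc⟩ := hn hc.1
    obtain ⟨z, rfl⟩ : ∃ z, f = s(r, z) := by
      obtain ⟨⟨x, y⟩, rfl⟩ := f.exists_rep
      rcases Sym2.mem_iff.mp hrf with rfl | rfl
      · exact ⟨y, rfl⟩
      · exact ⟨x, Sym2.eq_swap⟩
    have hadjrz : G'.Adj r z := hf
    by_cases hrange : z ∈ Set.range s
    · obtain ⟨j, rfl⟩ := hrange
      exact ⟨j, hadjrz, hfc⟩
    · exfalso
      refine hmax z (hG'le hadjrz) ?_ k (hfc ▸ hc)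
      intro hz
      rcases hz with hz | hz
      · exact hadjrz.ne' hz
      · exact hrange hz
  -- Finset versions
  set m : Fin (p + 1) → Finset ℕ :=
    fun k => (Finset.range Δ).filter (fun c => c ∈ missing G' φ Δ (s k)) with hm
  have hmem_m : ∀ k c, c ∈ m k ↔ c ∈ missing G' φ Δ (s k) := by
    intro k c
    rw [hm, Finset.mem_filter, Finset.mem_range]
    exact ⟨fun h => h.2, fun h => ⟨h.1, h⟩⟩
  have hncard : (missing G' φ Δ (s i)).ncard = (m i).card := by
    have : missing G' φ Δ (s i) = ↑(m i) := by
      ext c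
      rw [Finset.mem_coe, hmem_m]
    rw [this, Set.ncard_coe_finset]
  have hdisj : ∀ (a b : Fin (p + 1)), a ≠ b → Disjoint (m a) (m b) := by
    intro a b hab
    rw [Finset.disjoint_left]
    intro c hca hcb
    exact hpair a b hab c ((hmem_m a c).mp hca) ((hmem_m b c).mp hcb)
  have hMcard : (Finset.univ.biUnion m).card = ∑ k, (m k).card :=
    Finset.card_biUnion (fun a _ b _ hab => hdisj a b hab)
  have hMle : (Finset.univ.biUnion m).card ≤ p := by
    have hchoose : ∀ c ∈ Finset.univ.biUnion m,
        ∃ j : Fin (p + 1), G'.Adj r (s j) ∧ φ s(r, s j) = c := by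
      intro c hc
      rw [Finset.mem_biUnion] at hc
      obtain ⟨k, _, hck⟩ := hc
      exact hmaxedge k c ((hmem_m k c).mp hck)
    choose g hg1 hg2 using hchoose
    have hcard : (Finset.univ.biUnion m).card ≤
        (Finset.univ.erase (0 : Fin (p + 1))).card := by
      apply Finset.card_le_card_of_injOn
        (fun c => if hc : c ∈ Finset.univ.biUnion m then g c hc else 0)
      · intro c hc
        have hc' : c ∈ Finset.univ.biUnion m := hc
        simp only [dif_pos hc']
        refine Finset.mem_erase.mpr ⟨?_, Finset.mem_univ _⟩
        intro hh
        apply hnadj0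
        rw [← hh]
        exact hg1 c hc'
      · intro c hc c' hc' heq
        rw [Finset.mem_coe] at hc hc'
        simp only [dif_pos hc, dif_pos hc'] at heq
        rw [← hg2 c hc, ← hg2 c' hc', heq]
    calc (Finset.univ.biUnion m).card ≤ (Finset.univ.erase (0 : Fin (p + 1))).card := hcard
    _ = p := by
      rw [Finset.card_erase_of_mem (Finset.mem_univ _), Finset.card_univ, Fintype.card_fin]
      omega
  have hdeg0 : G'.degree (s 0) < Δ := by
    have hss : G'.neighborFinset (s 0) ⊂ G.neighborFinset (s 0) := by
      refine ⟨hnsub (s 0), fun hsub' => ?_⟩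
      have := hsub' (by rw [SimpleGraph.mem_neighborFinset]; exact hadj0.symm)
      rw [SimpleGraph.mem_neighborFinset] at this
      apply hnadj0
      exact this.symm
    calc G'.degree (s 0) < G.degree (s 0) := Finset.card_lt_card hss
    _ ≤ Δ := G.degree_le_maxDegree (s 0)
  have hm0 : (m 0).Nonempty := by
    obtain ⟨c, hc⟩ := MDN.exists_missing (G' := G') (ψ := φ) hdeg0
    exact ⟨c, (hmem_m 0 c).mpr hc⟩
  have hHi : ∀ k, m k = ∅ → G.degree (s k) = Δ := by
    intro k hk
    have hle : Δ ≤ G'.degree (s k) := by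
      apply MDN.le_degree_of_no_missing (ψ := φ)
      intro c hc
      have : c ∈ m k := (hmem_m k c).mpr hc
      rw [hk] at this
      simp at this
    have h1 := hdegle (s k)
    have h2 := G.degree_le_maxDegree (s k)
    omega
  -- final counting
  rw [hncard]
  by_cases hmi : (m i).card = 0
  · simp [hmi]
  · set T := Finset.univ.filter (fun k : Fin (p + 1) => m k ≠ ∅) with hT
    have hiT : i ∈ T := by
      rw [hT, Finset.mem_filter]
      refine ⟨Finset.mem_univ _, fun hh => hmi (by rw [hh]; simp)⟩
    have h0T : (0 : Fin (p + 1)) ∈ T := by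
      rw [hT, Finset.mem_filter]
      exact ⟨Finset.mem_univ _, Finset.nonempty_iff_ne_empty.mp hm0⟩
    have hsumT : ∑ k ∈ T, (m k).card ≤ ∑ k, (m k).card :=
      Finset.sum_le_sum_of_subset (Finset.filter_subset _ _)
    have herase : ∑ k ∈ T.erase i, (m k).card + (m i).card = ∑ k ∈ T, (m k).card :=
      Finset.sum_erase_add T _ hiT
    have hTe : (T.erase i).card ≤ ∑ k ∈ T.erase i, (m k).card := by
      have : ∀ k ∈ T.erase i, 1 ≤ (m k).card := by
        intro k hk
        have hk' := Finset.mem_of_mem_erase hk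
        rw [hT, Finset.mem_filter] at hk'
        have := Finset.nonempty_iff_ne_empty.mpr hk'.2
        exact Finset.card_pos.mpr this
      calc (T.erase i).card = ∑ _k ∈ T.erase i, 1 := by simp
      _ ≤ ∑ k ∈ T.erase i, (m k).card := Finset.sum_le_sum this
    have hTec : (T.erase i).card = T.card - 1 := Finset.card_erase_of_mem hiT
    have hT1 : 1 ≤ T.card := Finset.card_pos.mpr ⟨0, h0T⟩
    have hpart : (Finset.univ.filter (fun k : Fin (p + 1) => m k = ∅)).card + T.card = p + 1 := by
      rw [hT]
      rw [Finset.card_filter_add_card_filter_not (fun k => m k = ∅)]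
      rw [Finset.card_univ, Fintype.card_fin]
    have hfinal : (m i).card ≤ (Finset.univ.filter (fun k : Fin (p + 1) => m k = ∅)).card := by
      have hsum_all : ∑ k, (m k).card ≤ p := by rw [← hMcard]; exact hMle
      omega
    refine hfinal.trans (Finset.card_le_card ?_)
    intro k hk
    rw [Finset.mem_filter] at hk ⊢
    exact ⟨Finset.mem_univ _, hHi k hk.2⟩
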